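/- Every uniquely k-colorable graph on n vertices has at least (k−1)n − k(k−1)/2 edges. -/

import Mathlib

open Finset

/-- A proper coloring of `G` with colors `Fin k`. -/
def ProperColoring {V : Type} (G : SimpleGraph V) {k : ℕ} (c : V → Fin k) : Prop :=
  ∀ u v, G.Adj u v → c u ≠ c v

/-- `G` is uniquely `k`-colorable: it has a proper coloring using all `k` colors, and any two
proper `k`-colorings differ only by a permutation of the colors. -/
def UniquelyColorable {V : Type} (G : SimpleGraph V) (k : ℕ) : Prop :=
  (∃ c : V → Fin k, Function.Surjective c ∧ ProperColoring G c) ∧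
    ∀ c₁ c₂ : V → Fin k, ProperColoring G c₁ → ProperColoring G c₂ →
      ∃ σ : Equiv.Perm (Fin k), c₂ = σ ∘ c₁

open SimpleGraph

/-- Deleting a non-bridge edge preserves reachability. -/
lemma reach_del {V : Type*} (G : SimpleGraph V) {u v : V}
    (hr : (G \ fromEdgeSet {s(u,v)}).Reachable u v) {a b : V} (hab : G.Reachable a b) :
    (G \ fromEdgeSet {s(u,v)}).Reachable a b := by
  obtain ⟨p⟩ := hab
  induction p with
  | nil => exact Reachable.refl _
  | @cons x y z hxy q ih =>
    refine Reachable.trans ?_ ih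
    by_cases he : s(x,y) = s(u,v)
    · rw [Sym2.eq_iff] at he
      rcases he with ⟨rfl, rfl⟩ | ⟨rfl, rfl⟩
      · exact hr
      · exact hr.symm
    · exact Adj.reachable (by simp [sdiff_adj, fromEdgeSet_adj, he, hxy, hxy.ne])

/-- A connected graph on a finite vertex set has at least `card V - 1` edges. -/
lemma connected_card_le : ∀ (m : ℕ) {V : Type} [Fintype V] (G : SimpleGraph V),
    G.edgeSet.ncard = m → G.Connected → Fintype.card V ≤ m + 1 := by
  intro m
  induction m using Nat.strong_induction_on with
  | _ m ih =>
    intro V _ G hm hconn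
    classical
    by_cases hac : G.IsAcyclic
    · have ht : G.IsTree := ⟨hconn, hac⟩
      have := ht.card_edgeFinset
      have hfe : G.edgeSet.ncard = G.edgeFinset.card := by
        simp [Set.ncard_eq_toFinset_card', edgeFinset]
      omega
    · rw [isAcyclic_iff_forall_edge_isBridge] at hac
      push_neg at hac
      obtain ⟨e, he, hnb⟩ := hac
      induction e with
      | _ u v =>
      rw [isBridge_iff] at hnb
      push_neg at hnb
      have hadj : G.Adj u v := he
      have hr : (G \ fromEdgeSet {s(u,v)}).Reachable u v := hnb
      set G' := G \ fromEdgeSet {s(u,v)} with hG'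
      have hE : G'.edgeSet = G.edgeSet \ {s(u,v)} := by
        rw [hG', edgeSet_sdiff, edgeSet_fromEdgeSet, edgeSet_sdiff_sdiff_isDiag]
      have hfin : G.edgeSet.Finite := G.edgeSet.toFinite
      have hcard : G'.edgeSet.ncard = m - 1 := by
        rw [hE, Set.ncard_diff_singleton_of_mem he, hm]
      have hmpos : 1 ≤ m := by
        rw [← hm]
        exact (Set.ncard_pos hfin).2 ⟨_, he⟩
      have hconn' : G'.Connected := by
        have : Nonempty V := hconn.nonempty
        exact SimpleGraph.Connected.mk (fun a b => reach_del G hr (hconn a b))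
      have := ih (m-1) (by omega) G' hcard hconn'
      omega

lemma pair_bound {n k : ℕ} {G : SimpleGraph (Fin n)} [DecidableRel G.Adj]
    {c : Fin n → Fin k} (hc : ProperColoring G c) (hs : Function.Surjective c)
    (huniq : ∀ c₁ c₂ : Fin n → Fin k, ProperColoring G c₁ → ProperColoring G c₂ →
      ∃ σ : Equiv.Perm (Fin k), c₂ = σ ∘ c₁)
    {i j : Fin k} (hij : i ≠ j) :
    ((univ.filter (fun v => c v = i)).card + (univ.filter (fun v => c v = j)).card : ℤ) - 1
      ≤ ((G.edgeFinset.filter (fun e => Sym2.map c e = s(i,j))).card : ℤ) := by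
  classical
  set S : Set (Fin n) := {v | c v = i ∨ c v = j} with hS
  set H : SimpleGraph S := G.induce S with hH
  have hcS : ∀ w : Fin n, w ∈ S → c w = i ∨ c w = j := fun w hw => hw
  -- H is connected
  have hne : Nonempty S := by
    obtain ⟨v, hv⟩ := hs i
    exact ⟨⟨v, Or.inl hv⟩⟩
  have hconn : H.Connected := by
    rw [connected_iff]
    refine ⟨?_, hne⟩
    by_contra hpre
    rw [Preconnected] at hpre
    push_neg at hpre
    obtain ⟨u, v, huv⟩ := hpre
    set T : Set (Fin n) := {w | ∃ h : w ∈ S, H.Reachable u ⟨w, h⟩} with hT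
    set c' : Fin n → Fin k := fun w => if w ∈ T then Equiv.swap i j (c w) else c w with hc'
    have hSmem : ∀ w : Fin n, w ∈ T → w ∈ S := fun w hw => hw.1
    have hadjT : ∀ a b : Fin n, G.Adj a b → a ∈ T → b ∈ S → b ∈ T := by
      rintro a b hab ⟨haS, har⟩ hbS
      exact ⟨hbS, har.trans (Adj.reachable (by exact hab))⟩
    have hswap : ∀ w : Fin n, w ∈ S → Equiv.swap i j (c w) = i ∨ Equiv.swap i j (c w) = j := by
      intro w hw
      rcases hcS w hw with h | h <;> rw [h] <;> simp [Equiv.swap_apply_left, Equiv.swap_apply_right]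
    have hproper : ProperColoring G c' := by
      intro a b hab heq
      by_cases haT : a ∈ T <;> by_cases hbT : b ∈ T
      · simp only [hc', haT, hbT, if_pos] at heq
        exact hc a b hab (Equiv.injective _ heq)
      · have hbS : b ∉ S := fun hbS => hbT (hadjT a b hab haT hbS)
        have hb : c b ≠ i ∧ c b ≠ j := by
          constructor <;> intro h <;> exact hbS (by rw [hS]; simp [h])
        simp only [hc', haT, hbT, if_pos, if_neg, if_true, if_false] at heq
        rcases hswap a (hSmem a haT) with h | h <;> rw [heq] at h
        · exact hb.1 h
        · exact hb.2 h
      · have haS : a ∉ S := fun haS => haT (hadjT b a hab.symm hbT haS)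
        have ha : c a ≠ i ∧ c a ≠ j := by
          constructor <;> intro h <;> exact haS (by rw [hS]; simp [h])
        simp only [hc', haT, hbT, if_pos, if_neg, if_true, if_false] at heq
        rcases hswap b (hSmem b hbT) with h | h <;> rw [← heq] at h
        · exact ha.1 h
        · exact ha.2 h
      · simp only [hc', haT, hbT, if_neg, if_false] at heq
        exact hc a b hab heq
    obtain ⟨σ, hσ⟩ := huniq c c' hc hproper
    have huT : (u : Fin n) ∈ T := ⟨u.2, by exact Reachable.refl _⟩
    have hvT : (v : Fin n) ∉ T := by
      rintro ⟨h, hr⟩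
      exact huv (by convert hr using 2)
    have h1 : σ (c u) = Equiv.swap i j (c u) := by
      have := congrFun hσ u
      simpa [hc', huT] using this.symm
    have h2 : σ (c v) = c v := by
      have := congrFun hσ v
      simpa [hc', hvT] using this.symm
    have hcu := hcS u u.2
    have hcv := hcS v v.2
    have hne1 : σ (c u) ≠ c u := by
      rw [h1]
      rcases hcu with h | h <;> rw [h] <;> simp [hij, hij.symm, Equiv.swap_apply_left, Equiv.swap_apply_right]
    by_cases hcc : c (u : Fin n) = c (v : Fin n)
    · rw [hcc, h2] at hne1; exact hne1 rfl
    · have : Equiv.swap i j (c u) = c v := by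
        rcases hcu with h | h <;> rcases hcv with h' | h'
        · exact absurd (h.trans h'.symm) hcc
        · rw [h, h', Equiv.swap_apply_left]
        · rw [h, h', Equiv.swap_apply_right]
        · exact absurd (h.trans h'.symm) hcc
      rw [this, ← h2] at h1
      exact hcc (σ.injective h1)
  -- count
  have hcard := connected_card_le H.edgeSet.ncard H rfl hconn
  have hcardS : Fintype.card S =
      (univ.filter (fun v => c v = i)).card + (univ.filter (fun v => c v = j)).card := by
    rw [← Nat.card_eq_fintype_card, Nat.card_coe_set_eq, hS,
      show {v : Fin n | c v = i ∨ c v = j} =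
        ↑(univ.filter (fun v => c v = i) ∪ univ.filter (fun v => c v = j)) by ext x; simp,
      Set.ncard_coe_finset]
    rw [card_union_of_disjoint]
    rw [Finset.disjoint_left]
    intro a ha ha'
    simp only [mem_filter] at ha ha'
    exact hij (ha.2 ▸ ha'.2 ▸ rfl)
  set B := G.edgeFinset.filter (fun e => Sym2.map c e = s(i,j)) with hB
  have hinj : Set.InjOn (Sym2.map (Subtype.val : S → Fin n)) H.edgeSet :=
    (Sym2.map.injective Subtype.val_injective).injOn
  have hsub : Sym2.map (Subtype.val : S → Fin n) '' H.edgeSet ⊆ ↑B := by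
    rintro e ⟨e', he', rfl⟩
    induction e' with
    | _ a b =>
      rw [mem_edgeSet] at he'
      have hab : G.Adj a b := by exact he'
      simp only [hB, Finset.coe_filter, Set.mem_setOf_eq, mem_edgeFinset, Sym2.map_pair_eq, mem_edgeSet]
      refine ⟨hab, ?_⟩
      have hca := hcS a a.2
      have hcb := hcS b b.2
      have : c a ≠ c b := hc _ _ hab
      rcases hca with h | h <;> rcases hcb with h' | h'
      · exact absurd (h.trans h'.symm) this
      · rw [h, h']
      · rw [h, h', Sym2.eq_swap]
      · exact absurd (h.trans h'.symm) this
  have hle : H.edgeSet.ncard ≤ B.card := by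
    rw [← Set.ncard_coe_finset]
    calc H.edgeSet.ncard = (Sym2.map (Subtype.val : S → Fin n) '' H.edgeSet).ncard :=
          (Set.ncard_image_of_injOn hinj).symm
      _ ≤ _ := Set.ncard_le_ncard hsub (B : Set (Sym2 (Fin n))).toFinite
  have := hcardS ▸ hcard
  push_cast
  omega


lemma sum_pairs {k : ℕ} (N : Fin k → ℤ) :
    ∑ p ∈ univ.filter (fun p : Fin k × Fin k => p.1 < p.2), (N p.1 + N p.2)
      = ∑ p ∈ univ.filter (fun p : Fin k × Fin k => p.1 ≠ p.2), N p.1 := by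
  rw [Finset.sum_filter, Finset.sum_filter]
  have hswap : ∑ p : Fin k × Fin k, (if p.1 < p.2 then N p.2 else 0)
      = ∑ p : Fin k × Fin k, (if p.2 < p.1 then N p.1 else 0) :=
    Fintype.sum_equiv (Equiv.prodComm _ _) _ _ (fun p => rfl)
  calc ∑ p : Fin k × Fin k, (if p.1 < p.2 then N p.1 + N p.2 else 0)
      = ∑ p : Fin k × Fin k, ((if p.1 < p.2 then N p.1 else 0) + (if p.1 < p.2 then N p.2 else 0)) := by
        refine Finset.sum_congr rfl fun p _ => ?_
        split <;> simp
    _ = (∑ p : Fin k × Fin k, (if p.1 < p.2 then N p.1 else 0))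
        + ∑ p : Fin k × Fin k, (if p.1 < p.2 then N p.2 else 0) := Finset.sum_add_distrib
    _ = ∑ p : Fin k × Fin k, ((if p.1 < p.2 then N p.1 else 0) + (if p.2 < p.1 then N p.1 else 0)) := by
        rw [hswap, ← Finset.sum_add_distrib]
    _ = ∑ p : Fin k × Fin k, (if p.1 ≠ p.2 then N p.1 else 0) := by
        refine Finset.sum_congr rfl fun p _ => ?_
        rcases lt_trichotomy p.1 p.2 with h | h | h
        · simp [h, h.ne, not_lt_of_gt h]
        · simp [h]
        · simp [h, h.ne', not_lt_of_gt h]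

lemma sum_ne {k : ℕ} (hk : 1 ≤ k) (N : Fin k → ℤ) :
    ∑ p ∈ univ.filter (fun p : Fin k × Fin k => p.1 ≠ p.2), N p.1
      = ((k : ℤ) - 1) * ∑ i, N i := by
  rw [Finset.sum_filter, Fintype.sum_prod_type]
  have hinner : ∀ i : Fin k, ∑ j : Fin k, (if i ≠ j then N i else 0) = ((k : ℤ) - 1) * N i := by
    intro i
    rw [Finset.sum_ite, Finset.sum_const, Finset.sum_const_zero, add_zero]
    have hcard : (univ.filter (fun j : Fin k => i ≠ j)).card = k - 1 := by
      rw [Finset.filter_ne, Finset.card_erase_of_mem (mem_univ _)]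
      simp
    rw [hcard, nsmul_eq_mul]
    congr 1
    push_cast [Nat.cast_sub hk]
    ring
  rw [Finset.sum_congr rfl (fun i _ => hinner i), ← Finset.mul_sum]

/-- Every uniquely `k`-colorable graph on `n` vertices has at least `(k-1)n - k(k-1)/2` edges. -/
theorem uniquely_colorable_edge_bound (n k : ℕ) (G : SimpleGraph (Fin n)) [DecidableRel G.Adj]
    (h : UniquelyColorable G k) :
    ((k : ℤ) - 1) * n - k * (k - 1) / 2 ≤ (G.edgeFinset.card : ℤ) := by
  classical
  obtain ⟨⟨c, hs, hc⟩, huniq⟩ := h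
  rcases Nat.eq_zero_or_pos k with rfl | hk
  · have h0 : (0:ℤ) ≤ (n:ℤ) := by positivity
    have h0' : (0:ℤ) ≤ (G.edgeFinset.card:ℤ) := by positivity
    push_cast
    norm_num
  set P : Finset (Fin k × Fin k) := univ.filter (fun p => p.1 < p.2) with hP
  set B : Fin k × Fin k → Finset (Sym2 (Fin n)) :=
    fun p => G.edgeFinset.filter (fun e => Sym2.map c e = s(p.1, p.2)) with hBdef
  set N : Fin k → ℤ := fun i => ((univ.filter (fun v => c v = i)).card : ℤ) with hN
  -- total vertices
  have hsum_n : ∑ i, N i = (n : ℤ) := by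
    have h1 : (univ : Finset (Fin n)).card
        = ∑ i, (univ.filter (fun v => c v = i)).card :=
      Finset.card_eq_sum_card_fiberwise (fun v _ => mem_univ (c v))
    have h2' : ∑ i, (univ.filter (fun v => c v = i)).card = n := by simpa using h1.symm
    rw [hN]
    beta_reduce
    exact_mod_cast h2'
  -- disjointness and edge bound
  have h1 : ∑ p ∈ P, ((B p).card : ℤ) ≤ (G.edgeFinset.card : ℤ) := by
    have hdisj : ∀ p ∈ P, ∀ q ∈ P, p ≠ q → Disjoint (B p) (B q) := by
      intro p hp q hq hpq
      rw [Finset.disjoint_left]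
      intro e hep heq
      simp only [hBdef, mem_filter] at hep heq
      have := hep.2.symm.trans heq.2
      rw [Sym2.eq_iff] at this
      simp only [hP, mem_filter] at hp hq
      rcases this with ⟨h1', h2'⟩ | ⟨h1', h2'⟩
      · exact hpq (Prod.ext h1' h2')
      · exact absurd (h1' ▸ h2' ▸ hq.2) (not_lt_of_gt hp.2)
    have hsub : P.biUnion B ⊆ G.edgeFinset :=
      Finset.biUnion_subset.2 fun p _ => Finset.filter_subset _ _
    have := Finset.card_biUnion hdisj
    have hle := Finset.card_le_card hsub
    rw [this] at hle
    exact_mod_cast hle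
  -- per pair bound
  have h2 : ∀ p ∈ P, N p.1 + N p.2 - 1 ≤ ((B p).card : ℤ) := by
    intro p hp
    simp only [hP, mem_filter] at hp
    exact pair_bound hc hs huniq (ne_of_lt hp.2)
  have h3 : ∑ p ∈ P, (N p.1 + N p.2 - 1) ≤ ∑ p ∈ P, ((B p).card : ℤ) :=
    Finset.sum_le_sum h2
  have h4 : ∑ p ∈ P, (N p.1 + N p.2 - 1)
      = ((k : ℤ) - 1) * n - P.card := by
    rw [Finset.sum_sub_distrib, Finset.sum_const, sum_pairs, sum_ne hk, hsum_n]
    push_cast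
    ring
  -- P.card
  have h5 : 2 * (P.card : ℤ) = (k : ℤ) * ((k : ℤ) - 1) := by
    have := sum_pairs (fun _ : Fin k => (1 : ℤ))
    rw [sum_ne hk (fun _ : Fin k => (1 : ℤ))] at this
    simp only [Finset.sum_const, nsmul_eq_mul, mul_one] at this
    rw [← hP] at this
    push_cast at this
    rw [Finset.card_univ, Fintype.card_fin] at this
    linarith
  have h6 : (k : ℤ) * ((k : ℤ) - 1) / 2 = P.card := by
    rw [← h5, Int.mul_ediv_cancel_left _ two_ne_zero]
  push_cast
  rw [h6] at *
  linarith [h4 ▸ h3.trans h1]
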